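/- Let F be a real random variable, G an ℝ^d-valued random vector with positive-definite covariance, and consider the vector control-variates variance V(β) = (1/n)Var(F) − (2/n)βᵀ Cov(G,F) + ((n+k)/(nk)) βᵀ Var(G) β over β ∈ ℝ^d. Then V is a strictly convex quadratic minimized uniquely at β_opt = (k/(k+n)) Var(G)^{-1} Cov(G,F), with minimum value (1/n)(1 − (k/(k+n)) ρ²(G,F)) Var(F), where ρ²(G,F) = Cov(F,G)ᵀ Var(G)^{-1} Cov(G,F)/Var(F). -/

import Mathlib

open MeasureTheory ProbabilityTheory Matrix

/-- Covariance of two real random variables. -/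
noncomputable def cov {Ω : Type*} [MeasurableSpace Ω] (X Y : Ω → ℝ) (μ : Measure Ω) : ℝ :=
  ∫ ω, (X ω - ∫ x, X x ∂μ) * (Y ω - ∫ x, Y x ∂μ) ∂μ

/-- Covariance matrix of an `ℝ^d`-valued random vector. -/
noncomputable def covMatrix {Ω : Type*} [MeasurableSpace Ω] {d : ℕ}
    (G : Ω → Fin d → ℝ) (μ : Measure Ω) : Matrix (Fin d) (Fin d) ℝ :=
  Matrix.of fun i j => cov (fun ω => G ω i) (fun ω => G ω j) μ

/-- Cross-covariance vector of an `ℝ^d`-valued random vector with a scalar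
random variable. -/
noncomputable def covVec {Ω : Type*} [MeasurableSpace Ω] {d : ℕ}
    (G : Ω → Fin d → ℝ) (F : Ω → ℝ) (μ : Measure Ω) : Fin d → ℝ :=
  fun i => cov (fun ω => G ω i) F μ

private lemma quad_sub_expand {d : ℕ} (A : Matrix (Fin d) (Fin d) ℝ) (x y : Fin d → ℝ) :
    (x - y) ⬝ᵥ A *ᵥ (x - y)
      = x ⬝ᵥ A *ᵥ x - x ⬝ᵥ A *ᵥ y - y ⬝ᵥ A *ᵥ x + y ⬝ᵥ A *ᵥ y := by
  simp [sub_dotProduct, dotProduct_sub, Matrix.mulVec_sub]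
  ring

private lemma quad_comb_expand {d : ℕ} (A : Matrix (Fin d) (Fin d) ℝ) (a b : ℝ)
    (u v : Fin d → ℝ) :
    (a • u + b • v) ⬝ᵥ A *ᵥ (a • u + b • v)
      = a * a * (u ⬝ᵥ A *ᵥ u) + a * b * (u ⬝ᵥ A *ᵥ v)
        + a * b * (v ⬝ᵥ A *ᵥ u) + b * b * (v ⬝ᵥ A *ᵥ v) := by
  simp [add_dotProduct, dotProduct_add, Matrix.mulVec_add, Matrix.mulVec_smul,
    smul_dotProduct, dotProduct_smul, smul_eq_mul]
  ring

private lemma symm_dot {d : ℕ} {A : Matrix (Fin d) (Fin d) ℝ} (hA : Aᵀ = A)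
    (x y : Fin d → ℝ) : x ⬝ᵥ A *ᵥ y = y ⬝ᵥ A *ᵥ x := by
  rw [Matrix.dotProduct_mulVec, ← Matrix.mulVec_transpose, hA, dotProduct_comm]

/-- The vector control-variates variance
`V(β) = (1/n) Var F - (2/n) βᵀ Cov(G,F) + ((n+k)/(nk)) βᵀ Var(G) β` is a
strictly convex quadratic, uniquely minimized at
`β_opt = (k/(k+n)) Var(G)⁻¹ Cov(G,F)`, with minimum value
`(1/n)(1 - (k/(k+n)) ρ²(G,F)) Var F` where
`ρ²(G,F) = Cov(F,G)ᵀ Var(G)⁻¹ Cov(G,F)/Var F`. -/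
theorem vector_control_variates_variance_minimization
    {Ω : Type*} [MeasurableSpace Ω] (P : Measure Ω) [IsProbabilityMeasure P]
    {d : ℕ} (F : Ω → ℝ) (G : Ω → Fin d → ℝ)
    (hF : MemLp F 2 P) (hG : ∀ i, MemLp (fun ω => G ω i) 2 P)
    (hVarF : 0 < variance F P)
    (hpd : (covMatrix G P).PosDef)
    (n k : ℕ) (hn : 0 < n) (hk : 0 < k) :
    letI V : (Fin d → ℝ) → ℝ := fun β =>
      (1 / (n : ℝ)) * variance F P - (2 / (n : ℝ)) * (β ⬝ᵥ covVec G F P)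
        + (((n : ℝ) + k) / ((n : ℝ) * k)) * (β ⬝ᵥ covMatrix G P *ᵥ β)
    letI βopt : Fin d → ℝ := ((k : ℝ) / ((k : ℝ) + n)) • ((covMatrix G P)⁻¹ *ᵥ covVec G F P)
    StrictConvexOn ℝ Set.univ V ∧
    (∀ β : Fin d → ℝ, V βopt ≤ V β) ∧
    (∀ β : Fin d → ℝ, V β = V βopt → β = βopt) ∧
    V βopt = (1 / (n : ℝ))
        * (1 - ((k : ℝ) / ((k : ℝ) + n))
            * (covVec G F P ⬝ᵥ (covMatrix G P)⁻¹ *ᵥ covVec G F P / variance F P))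
        * variance F P := by
  have hn' : (n : ℝ) ≠ 0 := Nat.cast_ne_zero.mpr hn.ne'
  have hk' : (k : ℝ) ≠ 0 := Nat.cast_ne_zero.mpr hk.ne'
  have hkn : (k : ℝ) + n ≠ 0 := by positivity
  set S : Matrix (Fin d) (Fin d) ℝ := covMatrix G P with hSdef
  set c : Fin d → ℝ := covVec G F P with hcdef
  set t : ℝ := (k : ℝ) / ((k : ℝ) + n) with htdef
  set e : ℝ := ((n : ℝ) + k) / ((n : ℝ) * k) with hedef
  set βopt : Fin d → ℝ := t • (S⁻¹ *ᵥ c) with hβdef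
  set V : (Fin d → ℝ) → ℝ := fun β =>
      (1 / (n : ℝ)) * variance F P - (2 / (n : ℝ)) * (β ⬝ᵥ c)
        + e * (β ⬝ᵥ S *ᵥ β) with hVset
  have he : 0 < e := by rw [hedef]; positivity
  -- symmetry of S
  have hS : Sᵀ = S := by
    have := hpd.1
    rwa [Matrix.IsHermitian, Matrix.conjTranspose_eq_transpose_of_trivial] at this
  -- positivity of the quadratic form
  have hpos : ∀ x : Fin d → ℝ, x ≠ 0 → 0 < x ⬝ᵥ S *ᵥ x := by
    intro x hx
    have := hpd.dotProduct_mulVec_pos hx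
    simpa using this
  -- invertibility
  have hdet : IsUnit S.det := isUnit_iff_ne_zero.mpr (ne_of_gt hpd.det_pos)
  have hSinv : S *ᵥ (S⁻¹ *ᵥ c) = c := by
    rw [Matrix.mulVec_mulVec, Matrix.mul_nonsing_inv _ hdet, Matrix.one_mulVec]
  have hSβopt : S *ᵥ βopt = t • c := by
    show S *ᵥ (t • (S⁻¹ *ᵥ c)) = t • c
    rw [Matrix.mulVec_smul, hSinv]
  set ρ : ℝ := c ⬝ᵥ S⁻¹ *ᵥ c with hρdef
  have hp0 : βopt ⬝ᵥ c = t * ρ := by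
    rw [hβdef, smul_dotProduct, smul_eq_mul, dotProduct_comm]
  have hQ0 : βopt ⬝ᵥ S *ᵥ βopt = t * (t * ρ) := by
    rw [hSβopt, dotProduct_smul, smul_eq_mul, hp0]
  have hcross : ∀ β : Fin d → ℝ, β ⬝ᵥ S *ᵥ βopt = t * (β ⬝ᵥ c) := by
    intro β; rw [hSβopt, dotProduct_smul, smul_eq_mul]
  have hVdef : ∀ β : Fin d → ℝ, V β
      = (1 / (n : ℝ)) * variance F P - (2 / (n : ℝ)) * (β ⬝ᵥ c) + e * (β ⬝ᵥ S *ᵥ β) := by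
    intro β; rfl
  have hscal : 2 / (n : ℝ) = 2 * e * t := by
    rw [hedef, htdef]; field_simp; ring
  -- key decomposition
  have key : ∀ β : Fin d → ℝ,
      V β = V βopt + e * ((β - βopt) ⬝ᵥ S *ᵥ (β - βopt)) := by
    intro β
    rw [hVdef, hVdef, quad_sub_expand, symm_dot hS βopt β, hcross β, hQ0, hp0, hscal]
    ring
  refine ⟨?_, ?_, ?_, ?_⟩
  · -- strict convexity
    refine ⟨convex_univ, fun x _ y _ hxy a b ha hb hab => ?_⟩
    rw [key x, key y, key (a • x + b • y), smul_eq_mul, smul_eq_mul]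
    have hcomb : a • x + b • y - βopt = a • (x - βopt) + b • (y - βopt) := by
      have h1 : a • (x - βopt) + b • (y - βopt) = a • x + b • y - (a + b) • βopt := by
        module
      rw [h1, hab, one_smul]
    rw [hcomb, quad_comb_expand, symm_dot hS (y - βopt) (x - βopt)]
    have hdiff : (x - βopt) - (y - βopt) = x - y := by abel
    have hQpos : 0 < ((x - βopt) - (y - βopt)) ⬝ᵥ S *ᵥ ((x - βopt) - (y - βopt)) := by
      apply hpos
      rw [hdiff]
      exact sub_ne_zero_of_ne hxy
    rw [quad_sub_expand, symm_dot hS (y - βopt) (x - βopt)] at hQpos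
    have hb1 : b = 1 - a := by linarith
    have ha1 : (0:ℝ) < 1 - a := by linarith
    rw [hb1]
    nlinarith [mul_pos (mul_pos he (mul_pos ha ha1)) hQpos]
  · -- minimality
    intro β
    rw [key β]
    rcases eq_or_ne β βopt with h | h
    · simp [h]
    · have := hpos (β - βopt) (sub_ne_zero_of_ne h)
      nlinarith
  · -- uniqueness
    intro β hβ
    by_contra h
    have h1 := hpos (β - βopt) (sub_ne_zero_of_ne h)
    rw [key β] at hβ
    nlinarith
  · -- minimum value
    rw [hVdef, hQ0, hp0, hscal, hedef, htdef]
    field_simp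
    ring
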